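/- (Sufficiency part of the spectral decomposition theorem.) Suppose there exist a symmetric matrix Γ = [[Γ₁₁, 0],[0, 0]] ∈ ℝ^{n×n} with Γ₁₁ ∈ ℝ^{n_u×n_u} invertible, and a symmetric invertible matrix Φ ∈ ℝ^{n_φ×n_φ}, such that Γ + X_φᵀΦX_φ is invertible and, with T := (Γ + X_φᵀΦX_φ)⁻¹: J₁ᵀΓ₁₁ = Γ₁₁J₁, X_u T X_φᵀ = 0, and X_φ T X_φᵀ = Φ⁻¹. Then X_u T X_uᵀ is symmetric and invertible, and for any symmetric invertible matrix K'₂₂ ∈ ℝ^{n_φ×n_φ}, the matrices M_u := (X_u T X_uᵀ)⁻¹ and K := X^{-T}·[[−Γ₁₁J₁⁻¹, 0],[0, K'₂₂]]·X⁻¹ are symmetric and invertible and satisfy MX + KXJ = 0 with M = [[M_u, 0],[0, 0]]; moreover Γ = X_uᵀ M_u X_u. -/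

import Mathlib

open Matrix

/-- sufficiency part of the spectral decomposition theorem:
Let `X = [Xu; Xφ]` be invertible, `J₁` invertible diagonal, `J = diag(J₁, 0)`.
Suppose `Γ = diag(Γ₁₁, 0)` with `Γ₁₁` symmetric invertible, `Φ` symmetric
invertible, `Γ + Xφᵀ Φ Xφ` invertible, and with `T := (Γ + Xφᵀ Φ Xφ)⁻¹` one has
`J₁ᵀ Γ₁₁ = Γ₁₁ J₁`, `Xu T Xφᵀ = 0` and `Xφ T Xφᵀ = Φ⁻¹`. Then `Xu T Xuᵀ` is
symmetric and invertible, and for any symmetric invertible `K₂₂'`, the matrices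
`Mu := (Xu T Xuᵀ)⁻¹` and `K := X⁻ᵀ [[−Γ₁₁ J₁⁻¹, 0],[0, K₂₂']] X⁻¹` are
symmetric invertible, satisfy `M X + K X J = 0` with `M = diag(Mu, 0)`, and
`diag(Γ₁₁, 0) = Xuᵀ Mu Xu`. -/
theorem spectral_decomposition_sufficiency (nu nφ : ℕ)
    (Xu : Matrix (Fin nu) (Fin nu ⊕ Fin nφ) ℝ)
    (Xφ : Matrix (Fin nφ) (Fin nu ⊕ Fin nφ) ℝ)
    (X : Matrix (Fin nu ⊕ Fin nφ) (Fin nu ⊕ Fin nφ) ℝ)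
    (hX : X = fromRows Xu Xφ) (hXUnit : IsUnit X)
    (J₁ : Matrix (Fin nu) (Fin nu) ℝ)
    (hJ₁diag : ∀ i j, i ≠ j → J₁ i j = 0) (hJ₁Unit : IsUnit J₁)
    (J : Matrix (Fin nu ⊕ Fin nφ) (Fin nu ⊕ Fin nφ) ℝ)
    (hJ : J = fromBlocks J₁ 0 0 0)
    (Γ₁₁ : Matrix (Fin nu) (Fin nu) ℝ)
    (hΓ₁₁Symm : Γ₁₁ᵀ = Γ₁₁) (hΓ₁₁Unit : IsUnit Γ₁₁)
    (Φ : Matrix (Fin nφ) (Fin nφ) ℝ) (hΦSymm : Φᵀ = Φ) (hΦUnit : IsUnit Φ)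
    (T : Matrix (Fin nu ⊕ Fin nφ) (Fin nu ⊕ Fin nφ) ℝ)
    (hTUnit : IsUnit (fromBlocks Γ₁₁ 0 0 (0 : Matrix (Fin nφ) (Fin nφ) ℝ)
        + Xφᵀ * Φ * Xφ))
    (hT : T = (fromBlocks Γ₁₁ 0 0 (0 : Matrix (Fin nφ) (Fin nφ) ℝ)
        + Xφᵀ * Φ * Xφ)⁻¹)
    (hcomm : J₁ᵀ * Γ₁₁ = Γ₁₁ * J₁)
    (horth : Xu * T * Xφᵀ = 0)
    (hΦinv : Xφ * T * Xφᵀ = Φ⁻¹) :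
    (Xu * T * Xuᵀ)ᵀ = Xu * T * Xuᵀ ∧ IsUnit (Xu * T * Xuᵀ) ∧
    ∀ K₂₂' : Matrix (Fin nφ) (Fin nφ) ℝ, K₂₂'ᵀ = K₂₂' → IsUnit K₂₂' →
      (let Mu := (Xu * T * Xuᵀ)⁻¹;
       let K := (X⁻¹)ᵀ * fromBlocks (-(Γ₁₁ * J₁⁻¹)) 0 0 K₂₂' * X⁻¹;
       let M := fromBlocks Mu 0 0 (0 : Matrix (Fin nφ) (Fin nφ) ℝ);
       Muᵀ = Mu ∧ IsUnit Mu ∧ Kᵀ = K ∧ IsUnit K ∧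
       M * X + K * X * J = 0 ∧
       fromBlocks Γ₁₁ 0 0 (0 : Matrix (Fin nφ) (Fin nφ) ℝ) = Xuᵀ * Mu * Xu) := by
  set S : Matrix (Fin nu ⊕ Fin nφ) (Fin nu ⊕ Fin nφ) ℝ :=
    fromBlocks Γ₁₁ 0 0 (0 : Matrix (Fin nφ) (Fin nφ) ℝ) + Xφᵀ * Φ * Xφ with hS
  have hSsymm : Sᵀ = S := by
    simp [hS, transpose_add, fromBlocks_transpose, hΓ₁₁Symm, Matrix.transpose_mul, hΦSymm,
      Matrix.mul_assoc]
  have hTsymm : Tᵀ = T := by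
    rw [hT, Matrix.transpose_nonsing_inv, hSsymm]
  have hTUnit' : IsUnit T := by
    rw [hT]; exact Matrix.isUnit_nonsing_inv_iff.mpr hTUnit
  set A : Matrix (Fin nu) (Fin nu) ℝ := Xu * T * Xuᵀ with hA
  have hAsymm : Aᵀ = A := by
    rw [hA, Matrix.transpose_mul, Matrix.transpose_mul, transpose_transpose, hTsymm,
      Matrix.mul_assoc]
  have horth2 : Xφ * T * Xuᵀ = 0 := by
    have := congrArg Matrix.transpose horth
    rwa [Matrix.transpose_mul, Matrix.transpose_mul, transpose_transpose, hTsymm,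
      ← Matrix.mul_assoc, transpose_zero] at this
  have hXTXt : X * T * Xᵀ = fromBlocks A 0 0 Φ⁻¹ := by
    rw [hX, transpose_fromRows, fromRows_mul, fromRows_mul_fromCols, horth, horth2, hΦinv]
  have hXtUnit : IsUnit Xᵀ := by
    rw [Matrix.isUnit_iff_isUnit_det, Matrix.det_transpose,
      ← Matrix.isUnit_iff_isUnit_det]; exact hXUnit
  have hDUnit : IsUnit (fromBlocks A 0 0 Φ⁻¹) := by
    rw [← hXTXt]; exact (hXUnit.mul hTUnit').mul hXtUnit
  have hAUnit : IsUnit A := by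
    rw [Matrix.isUnit_iff_isUnit_det] at hDUnit ⊢
    rw [Matrix.det_fromBlocks_zero₂₁] at hDUnit
    exact isUnit_of_mul_isUnit_left hDUnit
  refine ⟨hAsymm, hAUnit, ?_⟩
  intro K₂₂' hK₂₂'symm hK₂₂'Unit
  have hΦinvUnit : IsUnit Φ⁻¹ := Matrix.isUnit_nonsing_inv_iff.mpr hΦUnit
  have hAdet := (Matrix.isUnit_iff_isUnit_det A).mp hAUnit
  have hΦdet := (Matrix.isUnit_iff_isUnit_det Φ).mp hΦUnit
  have hXdet := (Matrix.isUnit_iff_isUnit_det X).mp hXUnit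
  have hXtdet := (Matrix.isUnit_iff_isUnit_det Xᵀ).mp hXtUnit
  have hJ₁det := (Matrix.isUnit_iff_isUnit_det J₁).mp hJ₁Unit
  -- inverse of the block diagonal matrix
  have hDinv : (fromBlocks A 0 0 Φ⁻¹)⁻¹ = fromBlocks A⁻¹ 0 0 Φ := by
    apply Matrix.inv_eq_right_inv
    rw [fromBlocks_multiply]
    simp [Matrix.mul_nonsing_inv A hAdet, Matrix.nonsing_inv_mul Φ hΦdet,
      fromBlocks_one]
  -- Γ = Xuᵀ Mu Xu
  have hGamma : fromBlocks Γ₁₁ 0 0 (0 : Matrix (Fin nφ) (Fin nφ) ℝ) = Xuᵀ * A⁻¹ * Xu := by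
    have hT' : T = X⁻¹ * fromBlocks A 0 0 Φ⁻¹ * (Xᵀ)⁻¹ := by
      rw [← hXTXt]
      rw [Matrix.mul_assoc, Matrix.mul_assoc, Matrix.mul_nonsing_inv _ hXtdet, Matrix.mul_one,
        ← Matrix.mul_assoc, Matrix.nonsing_inv_mul _ hXdet, Matrix.one_mul]
    have hSinv : S = Xᵀ * fromBlocks A⁻¹ 0 0 Φ * X := by
      have h1 : T⁻¹ = S := by rw [hT, Matrix.nonsing_inv_nonsing_inv _
        ((Matrix.isUnit_iff_isUnit_det S).mp hTUnit)]
      rw [← h1, hT', Matrix.mul_inv_rev, Matrix.mul_inv_rev, hDinv,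
        Matrix.nonsing_inv_nonsing_inv _ hXtdet, Matrix.nonsing_inv_nonsing_inv _ hXdet,
        Matrix.mul_assoc]
    have hexp : Xᵀ * fromBlocks A⁻¹ 0 0 Φ * X = Xuᵀ * A⁻¹ * Xu + Xφᵀ * Φ * Xφ := by
      rw [hX, transpose_fromRows, fromCols_mul_fromBlocks, fromCols_mul_fromRows]
      simp [Matrix.mul_assoc]
    have := hSinv.trans hexp
    rw [hS] at this
    exact add_right_cancel this
  refine ⟨?_, ?_, ?_, ?_, ?_, hGamma⟩
  · rw [Matrix.transpose_nonsing_inv, hAsymm]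
  · exact Matrix.isUnit_nonsing_inv_iff.mpr hAUnit
  · -- K symmetric
    have hsym : (Γ₁₁ * J₁⁻¹)ᵀ = Γ₁₁ * J₁⁻¹ := by
      rw [Matrix.transpose_mul, Matrix.transpose_nonsing_inv, hΓ₁₁Symm]
      have : J₁ᵀ * (Γ₁₁ * J₁⁻¹) = J₁ᵀ * ((J₁ᵀ)⁻¹ * Γ₁₁) := by
        rw [← Matrix.mul_assoc, ← Matrix.mul_assoc, hcomm,
          Matrix.mul_nonsing_inv _ (by rwa [Matrix.det_transpose]),
          Matrix.mul_assoc, Matrix.mul_nonsing_inv _ hJ₁det, Matrix.mul_one, Matrix.one_mul]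
      have hJtdet : IsUnit J₁ᵀ.det := by rwa [Matrix.det_transpose]
      have := congrArg ((J₁ᵀ)⁻¹ * ·) this
      simpa [← Matrix.mul_assoc, Matrix.nonsing_inv_mul _ hJtdet] using this.symm
    simp only [Matrix.transpose_mul, transpose_transpose, fromBlocks_transpose,
      transpose_neg, hsym, hK₂₂'symm, transpose_zero, Matrix.mul_assoc]
  · -- K is a unit
    have hB : IsUnit (fromBlocks (-(Γ₁₁ * J₁⁻¹)) 0 0 K₂₂') := by
      rw [Matrix.isUnit_iff_isUnit_det, Matrix.det_fromBlocks_zero₂₁, Matrix.det_neg,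
        Fintype.card_fin]
      exact ((isUnit_one.neg.pow nu).mul ((Matrix.isUnit_iff_isUnit_det _).mp
        (hΓ₁₁Unit.mul (Matrix.isUnit_nonsing_inv_iff.mpr hJ₁Unit)))).mul
        ((Matrix.isUnit_iff_isUnit_det _).mp hK₂₂'Unit)
    have hXinvUnit : IsUnit X⁻¹ := Matrix.isUnit_nonsing_inv_iff.mpr hXUnit
    have hXinvtUnit : IsUnit (X⁻¹)ᵀ := by
      rw [Matrix.isUnit_iff_isUnit_det, Matrix.det_transpose,
        ← Matrix.isUnit_iff_isUnit_det]; exact hXinvUnit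
    exact (hXinvtUnit.mul hB).mul hXinvUnit
  · -- M X + K X J = 0
    have hXtMX : Xᵀ * fromBlocks A⁻¹ 0 0 (0 : Matrix (Fin nφ) (Fin nφ) ℝ) * X
        = Xuᵀ * A⁻¹ * Xu := by
      rw [hX, transpose_fromRows, fromCols_mul_fromBlocks, fromCols_mul_fromRows]
      simp [Matrix.mul_assoc]
    have hMX : fromBlocks A⁻¹ 0 0 (0 : Matrix (Fin nφ) (Fin nφ) ℝ) * X
        = (X⁻¹)ᵀ * fromBlocks Γ₁₁ 0 0 0 := by
      rw [hGamma, ← hXtMX, Matrix.transpose_nonsing_inv, ← Matrix.mul_assoc,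
        ← Matrix.mul_assoc, Matrix.nonsing_inv_mul _ hXtdet, Matrix.one_mul]
    have hKXJ : (X⁻¹)ᵀ * fromBlocks (-(Γ₁₁ * J₁⁻¹)) 0 0 K₂₂' * X⁻¹ * X * J
        = (X⁻¹)ᵀ * fromBlocks (-Γ₁₁) 0 0 0 := by
      rw [Matrix.mul_assoc _ (X⁻¹) X, Matrix.nonsing_inv_mul _ hXdet, Matrix.mul_one,
        hJ, Matrix.mul_assoc, fromBlocks_multiply]
      congr 1
      simp [Matrix.mul_assoc, Matrix.nonsing_inv_mul _ hJ₁det]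
    rw [hMX, hKXJ, ← Matrix.mul_add]
    simp [fromBlocks_add]
  done
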